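/- Let R be an algebraic curvature tensor on ℝ⁴ satisfying the Chern basis conditions R_{1213} = R_{1214} = R_{1223} = R_{1224} = R_{1314} = R_{1323} = 0. Then |R|² = 4( R_{1212}² + R_{1313}² + R_{1414}² + R_{2323}² + R_{2424}² + R_{3434}² + 2R_{1234}² + 2R_{1324}² + 2R_{1423}² + 2(ρ_{12}² + ρ_{13}² + ρ_{14}² + ρ_{23}² + ρ_{24}² + ρ_{34}²) ), where |R|² = ∑_{a,b,c,d} R_{abcd}² and ρ is the Ricci tensor. -/
import Mathlib


/-- Ricci tensor of an algebraic curvature tensor, `ρ i j = ∑ a, R a i j a`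
(sign convention so that ρ is the usual Ricci contraction). -/
def Ric {n : ℕ} (R : Fin n → Fin n → Fin n → Fin n → ℝ) (i j : Fin n) : ℝ :=
  ∑ a, R a i j a

/-- Scalar curvature `τ = ∑ i, ρ i i`. -/
def scalCurv {n : ℕ} (R : Fin n → Fin n → Fin n → Fin n → ℝ) : ℝ :=
  ∑ i, Ric R i i

/-- Squared norm of the curvature tensor, `|R|² = ∑ R_{ijkl}²`. -/
def normR2 {n : ℕ} (R : Fin n → Fin n → Fin n → Fin n → ℝ) : ℝ :=
  ∑ i, ∑ j, ∑ k, ∑ l, (R i j k l) ^ 2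

/-- Squared norm of the Ricci tensor, `|ρ|² = ∑ ρ_{ij}²`. -/
def normRic2 {n : ℕ} (R : Fin n → Fin n → Fin n → Fin n → ℝ) : ℝ :=
  ∑ i, ∑ j, (Ric R i j) ^ 2

/-- `R` is an algebraic curvature tensor: antisymmetry in the first and last pairs,
pair-interchange symmetry, and the first Bianchi identity. -/
def IsACT {n : ℕ} (R : Fin n → Fin n → Fin n → Fin n → ℝ) : Prop :=
  (∀ i j k l, R i j k l = - R j i k l) ∧
  (∀ i j k l, R i j k l = - R i j l k) ∧
  (∀ i j k l, R i j k l = R k l i j) ∧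
  (∀ i j k l, R i j k l + R j k i l + R k i j l = 0)

/-- Kronecker delta. -/
def kron {n : ℕ} (i j : Fin n) : ℝ := if i = j then 1 else 0

set_option maxHeartbeats 4000000 in
theorem chern_basis_normR2 (R : Fin 4 → Fin 4 → Fin 4 → Fin 4 → ℝ) (hR : IsACT R)
    (hC1 : R 0 1 0 2 = 0) (hC2 : R 0 1 0 3 = 0) (hC3 : R 0 1 1 2 = 0)
    (hC4 : R 0 1 1 3 = 0) (hC5 : R 0 2 0 3 = 0) (hC6 : R 0 2 1 2 = 0) :
    normR2 R =
      4 * ((R 0 1 0 1) ^ 2 + (R 0 2 0 2) ^ 2 + (R 0 3 0 3) ^ 2 + (R 1 2 1 2) ^ 2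
        + (R 1 3 1 3) ^ 2 + (R 2 3 2 3) ^ 2
        + 2 * (R 0 1 2 3) ^ 2 + 2 * (R 0 2 1 3) ^ 2 + 2 * (R 0 3 1 2) ^ 2
        + 2 * ((Ric R 0 1) ^ 2 + (Ric R 0 2) ^ 2 + (Ric R 0 3) ^ 2
          + (Ric R 1 2) ^ 2 + (Ric R 1 3) ^ 2 + (Ric R 2 3) ^ 2)) := by
  obtain ⟨ha, hb, hc, hbi⟩ := hR
  have e0000 : R 0 0 0 0 = 0 := by linear_combination (1/2) * (ha 0 0 0 0)
  have e0001 : R 0 0 0 1 = 0 := by linear_combination (1/2) * (ha 0 0 0 1)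
  have e0002 : R 0 0 0 2 = 0 := by linear_combination (1/2) * (ha 0 0 0 2)
  have e0003 : R 0 0 0 3 = 0 := by linear_combination (1/2) * (ha 0 0 0 3)
  have e0010 : R 0 0 1 0 = 0 := by linear_combination (1/2) * (ha 0 0 1 0)
  have e0011 : R 0 0 1 1 = 0 := by linear_combination (1/2) * (ha 0 0 1 1)
  have e0012 : R 0 0 1 2 = 0 := by linear_combination (1/2) * (ha 0 0 1 2)
  have e0013 : R 0 0 1 3 = 0 := by linear_combination (1/2) * (ha 0 0 1 3)
  have e0020 : R 0 0 2 0 = 0 := by linear_combination (1/2) * (ha 0 0 2 0)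
  have e0021 : R 0 0 2 1 = 0 := by linear_combination (1/2) * (ha 0 0 2 1)
  have e0022 : R 0 0 2 2 = 0 := by linear_combination (1/2) * (ha 0 0 2 2)
  have e0023 : R 0 0 2 3 = 0 := by linear_combination (1/2) * (ha 0 0 2 3)
  have e0030 : R 0 0 3 0 = 0 := by linear_combination (1/2) * (ha 0 0 3 0)
  have e0031 : R 0 0 3 1 = 0 := by linear_combination (1/2) * (ha 0 0 3 1)
  have e0032 : R 0 0 3 2 = 0 := by linear_combination (1/2) * (ha 0 0 3 2)
  have e0033 : R 0 0 3 3 = 0 := by linear_combination (1/2) * (ha 0 0 3 3)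
  have e0100 : R 0 1 0 0 = 0 := by linear_combination (1/2) * (hb 0 1 0 0)
  have e0102 : R 0 1 0 2 = 0 := by linear_combination (hC1)
  have e0103 : R 0 1 0 3 = 0 := by linear_combination (hC2)
  have e0110 : R 0 1 1 0 = -(R 0 1 0 1) := by linear_combination (hb 0 1 1 0)
  have e0111 : R 0 1 1 1 = 0 := by linear_combination (1/2) * (hb 0 1 1 1)
  have e0112 : R 0 1 1 2 = 0 := by linear_combination (hC3)
  have e0113 : R 0 1 1 3 = 0 := by linear_combination (hC4)
  have e0120 : R 0 1 2 0 = 0 := by linear_combination (hb 0 1 2 0) - (hC1)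
  have e0121 : R 0 1 2 1 = 0 := by linear_combination (hb 0 1 2 1) - (hC3)
  have e0122 : R 0 1 2 2 = 0 := by linear_combination (1/2) * (hb 0 1 2 2)
  have e0130 : R 0 1 3 0 = 0 := by linear_combination (hb 0 1 3 0) - (hC2)
  have e0131 : R 0 1 3 1 = 0 := by linear_combination (hb 0 1 3 1) - (hC4)
  have e0132 : R 0 1 3 2 = -(R 0 1 2 3) := by linear_combination (hb 0 1 3 2)
  have e0133 : R 0 1 3 3 = 0 := by linear_combination (1/2) * (hb 0 1 3 3)
  have e0200 : R 0 2 0 0 = 0 := by linear_combination (1/2) * (hb 0 2 0 0)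
  have e0201 : R 0 2 0 1 = 0 := by linear_combination (hc 0 2 0 1) + (hC1)
  have e0203 : R 0 2 0 3 = 0 := by linear_combination (hC5)
  have e0210 : R 0 2 1 0 = 0 := by linear_combination (hb 0 2 1 0) - (hc 0 2 0 1) - (hC1)
  have e0211 : R 0 2 1 1 = 0 := by linear_combination (1/2) * (hb 0 2 1 1)
  have e0212 : R 0 2 1 2 = 0 := by linear_combination (hC6)
  have e0220 : R 0 2 2 0 = -(R 0 2 0 2) := by linear_combination (hb 0 2 2 0)
  have e0221 : R 0 2 2 1 = 0 := by linear_combination (hb 0 2 2 1) - (hC6)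
  have e0222 : R 0 2 2 2 = 0 := by linear_combination (1/2) * (hb 0 2 2 2)
  have e0230 : R 0 2 3 0 = 0 := by linear_combination (hb 0 2 3 0) - (hC5)
  have e0231 : R 0 2 3 1 = -(R 0 2 1 3) := by linear_combination (hb 0 2 3 1)
  have e0232 : R 0 2 3 2 = -(R 0 2 2 3) := by linear_combination (hb 0 2 3 2)
  have e0233 : R 0 2 3 3 = 0 := by linear_combination (1/2) * (hb 0 2 3 3)
  have e0300 : R 0 3 0 0 = 0 := by linear_combination (1/2) * (hb 0 3 0 0)
  have e0301 : R 0 3 0 1 = 0 := by linear_combination (hc 0 3 0 1) + (hC2)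
  have e0302 : R 0 3 0 2 = 0 := by linear_combination (hc 0 3 0 2) + (hC5)
  have e0310 : R 0 3 1 0 = 0 := by linear_combination (hb 0 3 1 0) - (hc 0 3 0 1) - (hC2)
  have e0311 : R 0 3 1 1 = 0 := by linear_combination (1/2) * (hb 0 3 1 1)
  have e0320 : R 0 3 2 0 = 0 := by linear_combination (hb 0 3 2 0) - (hc 0 3 0 2) - (hC5)
  have e0321 : R 0 3 2 1 = -(R 0 3 1 2) := by linear_combination (hb 0 3 2 1)
  have e0322 : R 0 3 2 2 = 0 := by linear_combination (1/2) * (hb 0 3 2 2)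
  have e0330 : R 0 3 3 0 = -(R 0 3 0 3) := by linear_combination (hb 0 3 3 0)
  have e0331 : R 0 3 3 1 = -(R 0 3 1 3) := by linear_combination (hb 0 3 3 1)
  have e0332 : R 0 3 3 2 = -(R 0 3 2 3) := by linear_combination (hb 0 3 3 2)
  have e0333 : R 0 3 3 3 = 0 := by linear_combination (1/2) * (hb 0 3 3 3)
  have e1000 : R 1 0 0 0 = 0 := by linear_combination (1/2) * (hb 1 0 0 0)
  have e1001 : R 1 0 0 1 = -(R 0 1 0 1) := by linear_combination (ha 1 0 0 1)
  have e1002 : R 1 0 0 2 = 0 := by linear_combination (ha 1 0 0 2) - (hC1)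
  have e1003 : R 1 0 0 3 = 0 := by linear_combination (ha 1 0 0 3) - (hC2)
  have e1010 : R 1 0 1 0 = R 0 1 0 1 := by linear_combination (ha 1 0 1 0) - (hb 0 1 1 0)
  have e1011 : R 1 0 1 1 = 0 := by linear_combination (1/2) * (hb 1 0 1 1)
  have e1012 : R 1 0 1 2 = 0 := by linear_combination (ha 1 0 1 2) - (hC3)
  have e1013 : R 1 0 1 3 = 0 := by linear_combination (ha 1 0 1 3) - (hC4)
  have e1020 : R 1 0 2 0 = 0 := by linear_combination (ha 1 0 2 0) - (hb 0 1 2 0) + (hC1)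
  have e1021 : R 1 0 2 1 = 0 := by linear_combination (ha 1 0 2 1) - (hb 0 1 2 1) + (hC3)
  have e1022 : R 1 0 2 2 = 0 := by linear_combination (1/2) * (hb 1 0 2 2)
  have e1023 : R 1 0 2 3 = -(R 0 1 2 3) := by linear_combination (ha 1 0 2 3)
  have e1030 : R 1 0 3 0 = 0 := by linear_combination (ha 1 0 3 0) - (hb 0 1 3 0) + (hC2)
  have e1031 : R 1 0 3 1 = 0 := by linear_combination (ha 1 0 3 1) - (hb 0 1 3 1) + (hC4)
  have e1032 : R 1 0 3 2 = R 0 1 2 3 := by linear_combination (ha 1 0 3 2) - (hb 0 1 3 2)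
  have e1033 : R 1 0 3 3 = 0 := by linear_combination (1/2) * (hb 1 0 3 3)
  have e1100 : R 1 1 0 0 = 0 := by linear_combination (1/2) * (ha 1 1 0 0)
  have e1101 : R 1 1 0 1 = 0 := by linear_combination (1/2) * (ha 1 1 0 1)
  have e1102 : R 1 1 0 2 = 0 := by linear_combination (1/2) * (ha 1 1 0 2)
  have e1103 : R 1 1 0 3 = 0 := by linear_combination (1/2) * (ha 1 1 0 3)
  have e1110 : R 1 1 1 0 = 0 := by linear_combination (1/2) * (ha 1 1 1 0)
  have e1111 : R 1 1 1 1 = 0 := by linear_combination (1/2) * (ha 1 1 1 1)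
  have e1112 : R 1 1 1 2 = 0 := by linear_combination (1/2) * (ha 1 1 1 2)
  have e1113 : R 1 1 1 3 = 0 := by linear_combination (1/2) * (ha 1 1 1 3)
  have e1120 : R 1 1 2 0 = 0 := by linear_combination (1/2) * (ha 1 1 2 0)
  have e1121 : R 1 1 2 1 = 0 := by linear_combination (1/2) * (ha 1 1 2 1)
  have e1122 : R 1 1 2 2 = 0 := by linear_combination (1/2) * (ha 1 1 2 2)
  have e1123 : R 1 1 2 3 = 0 := by linear_combination (1/2) * (ha 1 1 2 3)
  have e1130 : R 1 1 3 0 = 0 := by linear_combination (1/2) * (ha 1 1 3 0)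
  have e1131 : R 1 1 3 1 = 0 := by linear_combination (1/2) * (ha 1 1 3 1)
  have e1132 : R 1 1 3 2 = 0 := by linear_combination (1/2) * (ha 1 1 3 2)
  have e1133 : R 1 1 3 3 = 0 := by linear_combination (1/2) * (ha 1 1 3 3)
  have e1200 : R 1 2 0 0 = 0 := by linear_combination (1/2) * (hb 1 2 0 0)
  have e1201 : R 1 2 0 1 = 0 := by linear_combination (hc 1 2 0 1) + (hC3)
  have e1202 : R 1 2 0 2 = 0 := by linear_combination (hc 1 2 0 2) + (hC6)
  have e1203 : R 1 2 0 3 = R 0 3 1 2 := by linear_combination (hc 1 2 0 3)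
  have e1210 : R 1 2 1 0 = 0 := by linear_combination (hb 1 2 1 0) - (hc 1 2 0 1) - (hC3)
  have e1211 : R 1 2 1 1 = 0 := by linear_combination (1/2) * (hb 1 2 1 1)
  have e1220 : R 1 2 2 0 = 0 := by linear_combination (hb 1 2 2 0) - (hc 1 2 0 2) - (hC6)
  have e1221 : R 1 2 2 1 = -(R 1 2 1 2) := by linear_combination (hb 1 2 2 1)
  have e1222 : R 1 2 2 2 = 0 := by linear_combination (1/2) * (hb 1 2 2 2)
  have e1230 : R 1 2 3 0 = -(R 0 3 1 2) := by linear_combination (hb 1 2 3 0) - (hc 1 2 0 3)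
  have e1231 : R 1 2 3 1 = -(R 1 2 1 3) := by linear_combination (hb 1 2 3 1)
  have e1232 : R 1 2 3 2 = -(R 1 2 2 3) := by linear_combination (hb 1 2 3 2)
  have e1233 : R 1 2 3 3 = 0 := by linear_combination (1/2) * (hb 1 2 3 3)
  have e1300 : R 1 3 0 0 = 0 := by linear_combination (1/2) * (hb 1 3 0 0)
  have e1301 : R 1 3 0 1 = 0 := by linear_combination (hc 1 3 0 1) + (hC4)
  have e1302 : R 1 3 0 2 = R 0 2 1 3 := by linear_combination (hc 1 3 0 2)
  have e1303 : R 1 3 0 3 = R 0 3 1 3 := by linear_combination (hc 1 3 0 3)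
  have e1310 : R 1 3 1 0 = 0 := by linear_combination (hb 1 3 1 0) - (hc 1 3 0 1) - (hC4)
  have e1311 : R 1 3 1 1 = 0 := by linear_combination (1/2) * (hb 1 3 1 1)
  have e1312 : R 1 3 1 2 = R 1 2 1 3 := by linear_combination (hc 1 3 1 2)
  have e1320 : R 1 3 2 0 = -(R 0 2 1 3) := by linear_combination (hb 1 3 2 0) - (hc 1 3 0 2)
  have e1321 : R 1 3 2 1 = -(R 1 2 1 3) := by linear_combination (hb 1 3 2 1) - (hc 1 3 1 2)
  have e1322 : R 1 3 2 2 = 0 := by linear_combination (1/2) * (hb 1 3 2 2)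
  have e1330 : R 1 3 3 0 = -(R 0 3 1 3) := by linear_combination (hb 1 3 3 0) - (hc 1 3 0 3)
  have e1331 : R 1 3 3 1 = -(R 1 3 1 3) := by linear_combination (hb 1 3 3 1)
  have e1332 : R 1 3 3 2 = -(R 1 3 2 3) := by linear_combination (hb 1 3 3 2)
  have e1333 : R 1 3 3 3 = 0 := by linear_combination (1/2) * (hb 1 3 3 3)
  have e2000 : R 2 0 0 0 = 0 := by linear_combination (1/2) * (hb 2 0 0 0)
  have e2001 : R 2 0 0 1 = 0 := by linear_combination (ha 2 0 0 1) - (hc 0 2 0 1) - (hC1)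
  have e2002 : R 2 0 0 2 = -(R 0 2 0 2) := by linear_combination (ha 2 0 0 2)
  have e2003 : R 2 0 0 3 = 0 := by linear_combination (ha 2 0 0 3) - (hC5)
  have e2010 : R 2 0 1 0 = 0 := by linear_combination (ha 2 0 1 0) - (hb 0 2 1 0) + (hc 0 2 0 1) + (hC1)
  have e2011 : R 2 0 1 1 = 0 := by linear_combination (1/2) * (hb 2 0 1 1)
  have e2012 : R 2 0 1 2 = 0 := by linear_combination (ha 2 0 1 2) - (hC6)
  have e2013 : R 2 0 1 3 = -(R 0 2 1 3) := by linear_combination (ha 2 0 1 3)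
  have e2020 : R 2 0 2 0 = R 0 2 0 2 := by linear_combination (ha 2 0 2 0) - (hb 0 2 2 0)
  have e2021 : R 2 0 2 1 = 0 := by linear_combination (ha 2 0 2 1) - (hb 0 2 2 1) + (hC6)
  have e2022 : R 2 0 2 2 = 0 := by linear_combination (1/2) * (hb 2 0 2 2)
  have e2023 : R 2 0 2 3 = -(R 0 2 2 3) := by linear_combination (ha 2 0 2 3)
  have e2030 : R 2 0 3 0 = 0 := by linear_combination (ha 2 0 3 0) - (hb 0 2 3 0) + (hC5)
  have e2031 : R 2 0 3 1 = R 0 2 1 3 := by linear_combination (ha 2 0 3 1) - (hb 0 2 3 1)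
  have e2032 : R 2 0 3 2 = R 0 2 2 3 := by linear_combination (ha 2 0 3 2) - (hb 0 2 3 2)
  have e2033 : R 2 0 3 3 = 0 := by linear_combination (1/2) * (hb 2 0 3 3)
  have e2100 : R 2 1 0 0 = 0 := by linear_combination (1/2) * (hb 2 1 0 0)
  have e2101 : R 2 1 0 1 = 0 := by linear_combination (ha 2 1 0 1) - (hc 1 2 0 1) - (hC3)
  have e2102 : R 2 1 0 2 = 0 := by linear_combination (ha 2 1 0 2) - (hc 1 2 0 2) - (hC6)
  have e2103 : R 2 1 0 3 = -(R 0 3 1 2) := by linear_combination (ha 2 1 0 3) - (hc 1 2 0 3)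
  have e2110 : R 2 1 1 0 = 0 := by linear_combination (ha 2 1 1 0) - (hb 1 2 1 0) + (hc 1 2 0 1) + (hC3)
  have e2111 : R 2 1 1 1 = 0 := by linear_combination (1/2) * (hb 2 1 1 1)
  have e2112 : R 2 1 1 2 = -(R 1 2 1 2) := by linear_combination (ha 2 1 1 2)
  have e2113 : R 2 1 1 3 = -(R 1 2 1 3) := by linear_combination (ha 2 1 1 3)
  have e2120 : R 2 1 2 0 = 0 := by linear_combination (ha 2 1 2 0) - (hb 1 2 2 0) + (hc 1 2 0 2) + (hC6)
  have e2121 : R 2 1 2 1 = R 1 2 1 2 := by linear_combination (ha 2 1 2 1) - (hb 1 2 2 1)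
  have e2122 : R 2 1 2 2 = 0 := by linear_combination (1/2) * (hb 2 1 2 2)
  have e2123 : R 2 1 2 3 = -(R 1 2 2 3) := by linear_combination (ha 2 1 2 3)
  have e2130 : R 2 1 3 0 = R 0 3 1 2 := by linear_combination (ha 2 1 3 0) - (hb 1 2 3 0) + (hc 1 2 0 3)
  have e2131 : R 2 1 3 1 = R 1 2 1 3 := by linear_combination (ha 2 1 3 1) - (hb 1 2 3 1)
  have e2132 : R 2 1 3 2 = R 1 2 2 3 := by linear_combination (ha 2 1 3 2) - (hb 1 2 3 2)
  have e2133 : R 2 1 3 3 = 0 := by linear_combination (1/2) * (hb 2 1 3 3)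
  have e2200 : R 2 2 0 0 = 0 := by linear_combination (1/2) * (ha 2 2 0 0)
  have e2201 : R 2 2 0 1 = 0 := by linear_combination (1/2) * (ha 2 2 0 1)
  have e2202 : R 2 2 0 2 = 0 := by linear_combination (1/2) * (ha 2 2 0 2)
  have e2203 : R 2 2 0 3 = 0 := by linear_combination (1/2) * (ha 2 2 0 3)
  have e2210 : R 2 2 1 0 = 0 := by linear_combination (1/2) * (ha 2 2 1 0)
  have e2211 : R 2 2 1 1 = 0 := by linear_combination (1/2) * (ha 2 2 1 1)
  have e2212 : R 2 2 1 2 = 0 := by linear_combination (1/2) * (ha 2 2 1 2)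
  have e2213 : R 2 2 1 3 = 0 := by linear_combination (1/2) * (ha 2 2 1 3)
  have e2220 : R 2 2 2 0 = 0 := by linear_combination (1/2) * (ha 2 2 2 0)
  have e2221 : R 2 2 2 1 = 0 := by linear_combination (1/2) * (ha 2 2 2 1)
  have e2222 : R 2 2 2 2 = 0 := by linear_combination (1/2) * (ha 2 2 2 2)
  have e2223 : R 2 2 2 3 = 0 := by linear_combination (1/2) * (ha 2 2 2 3)
  have e2230 : R 2 2 3 0 = 0 := by linear_combination (1/2) * (ha 2 2 3 0)
  have e2231 : R 2 2 3 1 = 0 := by linear_combination (1/2) * (ha 2 2 3 1)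
  have e2232 : R 2 2 3 2 = 0 := by linear_combination (1/2) * (ha 2 2 3 2)
  have e2233 : R 2 2 3 3 = 0 := by linear_combination (1/2) * (ha 2 2 3 3)
  have e2300 : R 2 3 0 0 = 0 := by linear_combination (1/2) * (hb 2 3 0 0)
  have e2301 : R 2 3 0 1 = R 0 1 2 3 := by linear_combination (hc 2 3 0 1)
  have e2302 : R 2 3 0 2 = R 0 2 2 3 := by linear_combination (hc 2 3 0 2)
  have e2303 : R 2 3 0 3 = R 0 3 2 3 := by linear_combination (hc 2 3 0 3)
  have e2310 : R 2 3 1 0 = -(R 0 1 2 3) := by linear_combination (hb 2 3 1 0) - (hc 2 3 0 1)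
  have e2311 : R 2 3 1 1 = 0 := by linear_combination (1/2) * (hb 2 3 1 1)
  have e2312 : R 2 3 1 2 = R 1 2 2 3 := by linear_combination (hc 2 3 1 2)
  have e2313 : R 2 3 1 3 = R 1 3 2 3 := by linear_combination (hc 2 3 1 3)
  have e2320 : R 2 3 2 0 = -(R 0 2 2 3) := by linear_combination (hb 2 3 2 0) - (hc 2 3 0 2)
  have e2321 : R 2 3 2 1 = -(R 1 2 2 3) := by linear_combination (hb 2 3 2 1) - (hc 2 3 1 2)
  have e2322 : R 2 3 2 2 = 0 := by linear_combination (1/2) * (hb 2 3 2 2)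
  have e2330 : R 2 3 3 0 = -(R 0 3 2 3) := by linear_combination (hb 2 3 3 0) - (hc 2 3 0 3)
  have e2331 : R 2 3 3 1 = -(R 1 3 2 3) := by linear_combination (hb 2 3 3 1) - (hc 2 3 1 3)
  have e2332 : R 2 3 3 2 = -(R 2 3 2 3) := by linear_combination (hb 2 3 3 2)
  have e2333 : R 2 3 3 3 = 0 := by linear_combination (1/2) * (hb 2 3 3 3)
  have e3000 : R 3 0 0 0 = 0 := by linear_combination (1/2) * (hb 3 0 0 0)
  have e3001 : R 3 0 0 1 = 0 := by linear_combination (ha 3 0 0 1) - (hc 0 3 0 1) - (hC2)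
  have e3002 : R 3 0 0 2 = 0 := by linear_combination (ha 3 0 0 2) - (hc 0 3 0 2) - (hC5)
  have e3003 : R 3 0 0 3 = -(R 0 3 0 3) := by linear_combination (ha 3 0 0 3)
  have e3010 : R 3 0 1 0 = 0 := by linear_combination (ha 3 0 1 0) - (hb 0 3 1 0) + (hc 0 3 0 1) + (hC2)
  have e3011 : R 3 0 1 1 = 0 := by linear_combination (1/2) * (hb 3 0 1 1)
  have e3012 : R 3 0 1 2 = -(R 0 3 1 2) := by linear_combination (ha 3 0 1 2)
  have e3013 : R 3 0 1 3 = -(R 0 3 1 3) := by linear_combination (ha 3 0 1 3)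
  have e3020 : R 3 0 2 0 = 0 := by linear_combination (ha 3 0 2 0) - (hb 0 3 2 0) + (hc 0 3 0 2) + (hC5)
  have e3021 : R 3 0 2 1 = R 0 3 1 2 := by linear_combination (ha 3 0 2 1) - (hb 0 3 2 1)
  have e3022 : R 3 0 2 2 = 0 := by linear_combination (1/2) * (hb 3 0 2 2)
  have e3023 : R 3 0 2 3 = -(R 0 3 2 3) := by linear_combination (ha 3 0 2 3)
  have e3030 : R 3 0 3 0 = R 0 3 0 3 := by linear_combination (ha 3 0 3 0) - (hb 0 3 3 0)
  have e3031 : R 3 0 3 1 = R 0 3 1 3 := by linear_combination (ha 3 0 3 1) - (hb 0 3 3 1)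
  have e3032 : R 3 0 3 2 = R 0 3 2 3 := by linear_combination (ha 3 0 3 2) - (hb 0 3 3 2)
  have e3033 : R 3 0 3 3 = 0 := by linear_combination (1/2) * (hb 3 0 3 3)
  have e3100 : R 3 1 0 0 = 0 := by linear_combination (1/2) * (hb 3 1 0 0)
  have e3101 : R 3 1 0 1 = 0 := by linear_combination (ha 3 1 0 1) - (hc 1 3 0 1) - (hC4)
  have e3102 : R 3 1 0 2 = -(R 0 2 1 3) := by linear_combination (ha 3 1 0 2) - (hc 1 3 0 2)
  have e3103 : R 3 1 0 3 = -(R 0 3 1 3) := by linear_combination (ha 3 1 0 3) - (hc 1 3 0 3)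
  have e3110 : R 3 1 1 0 = 0 := by linear_combination (ha 3 1 1 0) - (hb 1 3 1 0) + (hc 1 3 0 1) + (hC4)
  have e3111 : R 3 1 1 1 = 0 := by linear_combination (1/2) * (hb 3 1 1 1)
  have e3112 : R 3 1 1 2 = -(R 1 2 1 3) := by linear_combination (ha 3 1 1 2) - (hc 1 3 1 2)
  have e3113 : R 3 1 1 3 = -(R 1 3 1 3) := by linear_combination (ha 3 1 1 3)
  have e3120 : R 3 1 2 0 = R 0 2 1 3 := by linear_combination (ha 3 1 2 0) - (hb 1 3 2 0) + (hc 1 3 0 2)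
  have e3121 : R 3 1 2 1 = R 1 2 1 3 := by linear_combination (ha 3 1 2 1) - (hb 1 3 2 1) + (hc 1 3 1 2)
  have e3122 : R 3 1 2 2 = 0 := by linear_combination (1/2) * (hb 3 1 2 2)
  have e3123 : R 3 1 2 3 = -(R 1 3 2 3) := by linear_combination (ha 3 1 2 3)
  have e3130 : R 3 1 3 0 = R 0 3 1 3 := by linear_combination (ha 3 1 3 0) - (hb 1 3 3 0) + (hc 1 3 0 3)
  have e3131 : R 3 1 3 1 = R 1 3 1 3 := by linear_combination (ha 3 1 3 1) - (hb 1 3 3 1)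
  have e3132 : R 3 1 3 2 = R 1 3 2 3 := by linear_combination (ha 3 1 3 2) - (hb 1 3 3 2)
  have e3133 : R 3 1 3 3 = 0 := by linear_combination (1/2) * (hb 3 1 3 3)
  have e3200 : R 3 2 0 0 = 0 := by linear_combination (1/2) * (hb 3 2 0 0)
  have e3201 : R 3 2 0 1 = -(R 0 1 2 3) := by linear_combination (ha 3 2 0 1) - (hc 2 3 0 1)
  have e3202 : R 3 2 0 2 = -(R 0 2 2 3) := by linear_combination (ha 3 2 0 2) - (hc 2 3 0 2)
  have e3203 : R 3 2 0 3 = -(R 0 3 2 3) := by linear_combination (ha 3 2 0 3) - (hc 2 3 0 3)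
  have e3210 : R 3 2 1 0 = R 0 1 2 3 := by linear_combination (ha 3 2 1 0) - (hb 2 3 1 0) + (hc 2 3 0 1)
  have e3211 : R 3 2 1 1 = 0 := by linear_combination (1/2) * (hb 3 2 1 1)
  have e3212 : R 3 2 1 2 = -(R 1 2 2 3) := by linear_combination (ha 3 2 1 2) - (hc 2 3 1 2)
  have e3213 : R 3 2 1 3 = -(R 1 3 2 3) := by linear_combination (ha 3 2 1 3) - (hc 2 3 1 3)
  have e3220 : R 3 2 2 0 = R 0 2 2 3 := by linear_combination (ha 3 2 2 0) - (hb 2 3 2 0) + (hc 2 3 0 2)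
  have e3221 : R 3 2 2 1 = R 1 2 2 3 := by linear_combination (ha 3 2 2 1) - (hb 2 3 2 1) + (hc 2 3 1 2)
  have e3222 : R 3 2 2 2 = 0 := by linear_combination (1/2) * (hb 3 2 2 2)
  have e3223 : R 3 2 2 3 = -(R 2 3 2 3) := by linear_combination (ha 3 2 2 3)
  have e3230 : R 3 2 3 0 = R 0 3 2 3 := by linear_combination (ha 3 2 3 0) - (hb 2 3 3 0) + (hc 2 3 0 3)
  have e3231 : R 3 2 3 1 = R 1 3 2 3 := by linear_combination (ha 3 2 3 1) - (hb 2 3 3 1) + (hc 2 3 1 3)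
  have e3232 : R 3 2 3 2 = R 2 3 2 3 := by linear_combination (ha 3 2 3 2) - (hb 2 3 3 2)
  have e3233 : R 3 2 3 3 = 0 := by linear_combination (1/2) * (hb 3 2 3 3)
  have e3300 : R 3 3 0 0 = 0 := by linear_combination (1/2) * (ha 3 3 0 0)
  have e3301 : R 3 3 0 1 = 0 := by linear_combination (1/2) * (ha 3 3 0 1)
  have e3302 : R 3 3 0 2 = 0 := by linear_combination (1/2) * (ha 3 3 0 2)
  have e3303 : R 3 3 0 3 = 0 := by linear_combination (1/2) * (ha 3 3 0 3)
  have e3310 : R 3 3 1 0 = 0 := by linear_combination (1/2) * (ha 3 3 1 0)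
  have e3311 : R 3 3 1 1 = 0 := by linear_combination (1/2) * (ha 3 3 1 1)
  have e3312 : R 3 3 1 2 = 0 := by linear_combination (1/2) * (ha 3 3 1 2)
  have e3313 : R 3 3 1 3 = 0 := by linear_combination (1/2) * (ha 3 3 1 3)
  have e3320 : R 3 3 2 0 = 0 := by linear_combination (1/2) * (ha 3 3 2 0)
  have e3321 : R 3 3 2 1 = 0 := by linear_combination (1/2) * (ha 3 3 2 1)
  have e3322 : R 3 3 2 2 = 0 := by linear_combination (1/2) * (ha 3 3 2 2)
  have e3323 : R 3 3 2 3 = 0 := by linear_combination (1/2) * (ha 3 3 2 3)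
  have e3330 : R 3 3 3 0 = 0 := by linear_combination (1/2) * (ha 3 3 3 0)
  have e3331 : R 3 3 3 1 = 0 := by linear_combination (1/2) * (ha 3 3 3 1)
  have e3332 : R 3 3 3 2 = 0 := by linear_combination (1/2) * (ha 3 3 3 2)
  have e3333 : R 3 3 3 3 = 0 := by linear_combination (1/2) * (ha 3 3 3 3)
  simp only [normR2, Ric, Fin.sum_univ_four, e0000, e0001, e0002, e0003, e0010, e0011, e0012, e0013, e0020, e0021, e0022, e0023, e0030, e0031, e0032, e0033, e0100, e0102, e0103, e0110, e0111, e0112, e0113, e0120, e0121, e0122, e0130, e0131, e0132, e0133, e0200, e0201, e0203, e0210, e0211, e0212, e0220, e0221, e0222, e0230, e0231, e0232, e0233, e0300, e0301, e0302, e0310, e0311, e0320, e0321, e0322, e0330, e0331, e0332, e0333, e1000, e1001, e1002, e1003, e1010, e1011, e1012, e1013, e1020, e1021, e1022, e1023, e1030, e1031, e1032, e1033, e1100, e1101, e1102, e1103, e1110, e1111, e1112, e1113, e1120, e1121, e1122, e1123, e1130, e1131, e1132, e1133, e1200, e1201, e1202, e1203, e1210, e1211, e1220, e1221, e1222, e1230,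 e1231, e1232, e1233, e1300, e1301, e1302, e1303, e1310, e1311, e1312, e1320, e1321, e1322, e1330, e1331, e1332, e1333, e2000, e2001, e2002, e2003, e2010, e2011, e2012, e2013, e2020, e2021, e2022, e2023, e2030, e2031, e2032, e2033, e2100, e2101, e2102, e2103, e2110, e2111, e2112, e2113, e2120, e2121, e2122, e2123, e2130, e2131, e2132, e2133, e2200, e2201, e2202, e2203, e2210, e2211, e2212, e2213, e2220, e2221, e2222, e2223, e2230, e2231, e2232, e2233, e2300, e2301, e2302, e2303, e2310, e2311, e2312, e2313, e2320, e2321, e2322, e2330, e2331, e2332, e2333, e3000, e3001, e3002, e3003, e3010, e3011, e3012, e3013, e3020, e3021, e3022, e3023, e3030, e3031, e3032, e3033, e3100, e3101, e3102, e3103, e3110, e3111, e3112, e3113, e3120, e3121, e3122, e3123, e3130, e3131, e3132, e3133, e3200, e3201, e3202, e3203, e3210, e3211, e3212, e3213, e3220, e3221, e3222, e3223, e3230, e3231, e3232, e3233, e3300, e3301, e3302, e3303, e3310, e3311, e3312, e3313, e3320, e3321, e3322, e3323, e3330, e3331, e3332, e3333]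
  ring
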